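/- If 1 ≤ D < Σ_{k=0}^{K-1} N^{-k}, then N·(N−1)(D−1)/(N^K−N) < 1−(N−1)(D−1); consequently there is no feasible distribution p for the symmetric TSC scheme with p_m = (N−1)(D−1)/(N^K−N) for all m ∈ {N+1,…,N^K} and 0 ≤ p_m ≤ (N−1)(D−1)/(N^K−N) for all m ∈ {1,…,N}. -/

import Mathlib

open Finset Real

/-- Download cost of option `m` (0-indexed: options `1,…,N` of the paper are `m < N`)
in the symmetric TSC scheme with `N` databases and `K` messages. -/
noncomputable def tscCost (N m : ℕ) : ℝ := if m < N then (N : ℝ) - 1 else (N : ℝ)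

/-- `p` is a feasible query distribution for the symmetric TSC scheme with expected
normalized download cost `D`. -/
def TSCFeasible (N K : ℕ) (D : ℝ) (p : ℕ → ℝ) : Prop :=
  (∀ m ∈ Finset.range (N ^ K), 0 ≤ p m) ∧
  (∑ m ∈ Finset.range (N ^ K), p m = 1) ∧
  (1 / ((N : ℝ) - 1)) * (∑ m ∈ Finset.range (N ^ K), p m * tscCost N m) = D

/-- The optimal distribution `p*` for the symmetric TSC scheme. -/
noncomputable def tscOpt (N K : ℕ) (D : ℝ) (m : ℕ) : ℝ :=
  if m < N then (1 - ((N : ℝ) - 1) * (D - 1)) / N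
  else ((N : ℝ) - 1) * (D - 1) / ((N : ℝ) ^ K - (N : ℝ))

/-- Download cost of option `m` (0-indexed) in the alternative PIR scheme with
message length `L`. -/
noncomputable def altCost (N L m : ℕ) : ℝ := if m < N then (L : ℝ) else (L : ℝ) + 1

/-- `p` is a feasible query distribution for the alternative PIR scheme
(`M = N (L+1)^(K-1)` options) with expected normalized download cost `D`. -/
def AltFeasible (N K L : ℕ) (D : ℝ) (p : ℕ → ℝ) : Prop :=
  (∀ m ∈ Finset.range (N * (L + 1) ^ (K - 1)), 0 ≤ p m) ∧
  (∑ m ∈ Finset.range (N * (L + 1) ^ (K - 1)), p m = 1) ∧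
  (1 / (L : ℝ)) * (∑ m ∈ Finset.range (N * (L + 1) ^ (K - 1)), p m * altCost N L m) = D

/-- The optimal distribution `q*` for the alternative PIR scheme. -/
noncomputable def altOpt (N K L : ℕ) (D : ℝ) (m : ℕ) : ℝ :=
  if m < N then (1 - (L : ℝ) * (D - 1)) / N
  else (L : ℝ) * (D - 1) / ((N : ℝ) * ((L : ℝ) + 1) ^ (K - 1) - (N : ℝ))

/-- Rényi divergence of order `α` (`0 < α`, `α ≠ 1`) of a distribution `p` on `M`
options from the uniform distribution on those options (natural logarithm). -/
noncomputable def renyiDiv (M : ℕ) (α : ℝ) (p : ℕ → ℝ) : ℝ :=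
  (1 / (α - 1)) * Real.log ((M : ℝ) ^ (α - 1) * ∑ m ∈ Finset.range M, p m ^ α)

/-- Kullback–Leibler divergence of a distribution `p` on `M` options from the uniform
distribution on those options (natural logarithm, with `0 · log 0 = 0`). -/
noncomputable def klDivUnif (M : ℕ) (p : ℕ → ℝ) : ℝ :=
  ∑ m ∈ Finset.range M, p m * Real.log ((M : ℝ) * p m)

/-- The maximum of `p` over the `M` options. -/
noncomputable def maxOver (M : ℕ) (hM : M ≠ 0) (p : ℕ → ℝ) : ℝ :=
  (Finset.range M).sup' (Finset.nonempty_range_iff.mpr hM) p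

/-- if `1 ≤ D < ∑_{k<K} N^{-k}`, then
`N (N-1)(D-1)/(N^K-N) < 1-(N-1)(D-1)`; consequently there is no feasible distribution
for the symmetric TSC scheme equal to `(N-1)(D-1)/(N^K-N)` on the last `N^K-N` options
and at most that value on the first `N` options. -/
theorem tsc_wrong_support (N K : ℕ) (hN : 2 ≤ N) (hK : 2 ≤ K) (D : ℝ)
    (hD1 : 1 ≤ D) (hD2 : D < ∑ k ∈ Finset.range K, ((N : ℝ) ^ k)⁻¹) :
    (N : ℝ) * (((N : ℝ) - 1) * (D - 1) / ((N : ℝ) ^ K - N)) <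
      1 - ((N : ℝ) - 1) * (D - 1) ∧
    ¬ ∃ p : ℕ → ℝ, TSCFeasible N K D p ∧
        (∀ m ∈ Finset.Ico N (N ^ K),
          p m = ((N : ℝ) - 1) * (D - 1) / ((N : ℝ) ^ K - N)) ∧
        (∀ m ∈ Finset.range N,
          0 ≤ p m ∧ p m ≤ ((N : ℝ) - 1) * (D - 1) / ((N : ℝ) ^ K - N)) := by
  have hN1 : (1:ℝ) < (N:ℝ) := by exact_mod_cast hN
  have hN0 : (0:ℝ) < (N:ℝ) := by linarith
  have hNK' : N ≤ N ^ K := Nat.le_self_pow (by omega) N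
  have hNKlt : N < N ^ K := by
    calc N = N ^ 1 := (pow_one N).symm
    _ < N ^ K := Nat.pow_lt_pow_right hN (by omega)
  have hE : (0:ℝ) < (N:ℝ) ^ K - N := by
    have : ((N:ℕ):ℝ) < ((N ^ K : ℕ):ℝ) := by exact_mod_cast hNKlt
    push_cast at this; linarith
  -- key inequality
  have hne : ((N:ℝ))⁻¹ ≠ 1 := by
    intro h
    have : (N:ℝ) = 1 := by
      field_simp at h
      linarith [h]
    linarith
  have hkey : ((N:ℝ) - 1) * (D - 1) * (N:ℝ) ^ K < (N:ℝ) ^ K - N := by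
    have h := hD2
    rw [show (∑ k ∈ Finset.range K, ((N:ℝ) ^ k)⁻¹)
        = ∑ k ∈ Finset.range K, ((N:ℝ)⁻¹) ^ k by
      refine Finset.sum_congr rfl fun k _ => ?_
      rw [inv_pow], geom_sum_eq hne K] at h
    have hneg : (N:ℝ)⁻¹ - 1 < 0 := by
      have : (N:ℝ)⁻¹ < 1 := by
        rw [inv_lt_one_iff₀]; right; exact hN1
      linarith
    rw [lt_div_iff_of_neg hneg] at h
    -- h : ((N:ℝ)⁻¹) ^ K - 1 < D * ((N:ℝ)⁻¹ - 1)
    have hu : (N:ℝ) ^ K = (N:ℝ) * (N:ℝ) ^ (K - 1) := by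
      rw [← pow_succ']
      congr 1
      omega
    have ht1 : (N:ℝ) * (N:ℝ)⁻¹ = 1 := mul_inv_cancel₀ (ne_of_gt hN0)
    have ht2 : (N:ℝ) ^ K * ((N:ℝ)⁻¹) ^ K = 1 := by
      rw [← mul_pow, ht1, one_pow]
    have hNKpos : (0:ℝ) < (N:ℝ) ^ K := by positivity
    have hupos : (0:ℝ) < (N:ℝ) ^ (K - 1) := by positivity
    have h2 := mul_lt_mul_of_pos_right h hNKpos
    nlinarith [h2, ht2, hu, ht1, mul_pos hN0 hupos]
  have hE0 : ((N:ℝ) ^ K - N) ≠ 0 := ne_of_gt hE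
  set a : ℝ := ((N:ℝ) - 1) * (D - 1) with ha_def
  set c : ℝ := a / ((N:ℝ) ^ K - N) with hc_def
  have goal1 : (N:ℝ) * c < 1 - a := by
    rw [hc_def, show (N:ℝ) * (a / ((N:ℝ) ^ K - N)) = (N:ℝ) * a / ((N:ℝ) ^ K - N) by ring,
      div_lt_iff₀ hE]
    nlinarith [hkey]
  refine ⟨goal1, ?_⟩
  rintro ⟨p, ⟨hpos, hsum, -⟩, hIco, hbd⟩
  have hsplit := Finset.sum_Ico_consecutive p (Nat.zero_le N) hNK'
  rw [← Finset.range_eq_Ico] at hsplit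
  have h2 : ∑ m ∈ Finset.Ico N (N ^ K), p m = a := by
    calc ∑ m ∈ Finset.Ico N (N ^ K), p m
        = ∑ _m ∈ Finset.Ico N (N ^ K), c := Finset.sum_congr rfl hIco
      _ = ((N ^ K - N : ℕ) : ℝ) * c := by
          rw [Finset.sum_const, Nat.card_Ico, nsmul_eq_mul]
      _ = ((N:ℝ) ^ K - N) * c := by
          rw [Nat.cast_sub hNK', Nat.cast_pow]
      _ = a := by rw [hc_def]; field_simp
  have hsum1 : ∑ m ∈ Finset.range N, p m = 1 - a := by
    rw [h2, ← Finset.range_eq_Ico, hsum] at hsplit; linarith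
  have hub : ∑ m ∈ Finset.range N, p m ≤ (N:ℝ) * c := by
    calc ∑ m ∈ Finset.range N, p m ≤ ∑ _m ∈ Finset.range N, c :=
          Finset.sum_le_sum fun m hm => (hbd m hm).2
      _ = (N:ℝ) * c := by rw [Finset.sum_const, Finset.card_range, nsmul_eq_mul]
  linarith
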